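/- Let d > 1 be an integer and let A = (a_0, …, a_k) be a j-normal d-collection, i.e., d − 1 ≤ a_i ≤ 2(d−1) for all i < j and a_j < d − 1. Set X = 1 + Σ_{i=0}^{j} a_i·d^i. Then X < d^{j+1}, every natural number strictly less than X belongs to span_d(A), and X does not belong to span_d(A); in particular X is the smallest natural number not in span_d(A). -/

import Mathlib

/-- The span of a `d`-collection `A : ℕ →₀ ℕ` (where `A i` is the multiplicity of the
token `d ^ i`): the set of all sums `∑ i, c i * d ^ i` over sub-collections `c ≤ A`. -/
def dspan (d : ℕ) (A : ℕ →₀ ℕ) : Set ℕ :=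
  {n : ℕ | ∃ c : ℕ →₀ ℕ, (∀ i, c i ≤ A i) ∧ n = c.sum (fun i m => m * d ^ i)}

/-- The total sum `∑ i, a_i * d ^ i` of a `d`-collection. -/
def dsum (d : ℕ) (A : ℕ →₀ ℕ) : ℕ := A.sum (fun i m => m * d ^ i)

/-- Elementary exchange at index `i`: replace `d` tokens `d ^ i` by one token `d ^ (i+1)`. -/
noncomputable def exch (d i : ℕ) (A : ℕ →₀ ℕ) : ℕ →₀ ℕ :=
  A - Finsupp.single i d + Finsupp.single (i + 1) 1

/-- For a `j`-normal `d`-collection, `X = 1 + ∑_{i ≤ j} a_i d^i` satisfies `X < d^(j+1)`,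
every natural number below `X` is in the span, and `X` itself is not:
`X` is the smallest natural number not in the span. -/


lemma geom_aux (d : ℕ) (hd : 1 ≤ d) : ∀ k : ℕ, (d - 1) * ∑ i ∈ Finset.range k, d ^ i + 1 = d ^ k := by
  intro k
  induction k with
  | zero => simp
  | succ k ih =>
    have h2 : d ^ (k+1) = d ^ k + (d - 1) * d ^ k := by
      rw [pow_succ, Nat.sub_one_mul, mul_comm]
      have : d ^ k ≤ d * d ^ k := Nat.le_mul_of_pos_left _ (by omega)
      omega
    rw [Finset.sum_range_succ, Nat.mul_add]
    omega

lemma rep (d : ℕ) (hd : 1 < d) : ∀ (j : ℕ) (a : ℕ → ℕ), (∀ i, i < j → d - 1 ≤ a i) →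
    ∀ n, n ≤ ∑ i ∈ Finset.range (j+1), a i * d ^ i →
    ∃ c : ℕ → ℕ, (∀ i, c i ≤ a i) ∧ (∀ i, j < i → c i = 0) ∧
      ∑ i ∈ Finset.range (j+1), c i * d ^ i = n := by
  intro j
  induction j with
  | zero =>
    intro a _ n hn
    rw [Finset.sum_range_one, pow_zero, Nat.mul_one] at hn
    refine ⟨fun i => if i = 0 then n else 0, ?_, ?_, ?_⟩
    · intro i
      show (if i = 0 then n else 0) ≤ a i
      by_cases h : i = 0
      · rw [if_pos h, h]; exact hn
      · rw [if_neg h]; exact Nat.zero_le _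
    · intro i hi
      show (if i = 0 then n else 0) = 0
      rw [if_neg (by omega)]
    · simp
  | succ j ih =>
    intro a ha n hn
    have hppos : 0 < d ^ (j+1) := Nat.pow_pos (by omega)
    have hgeom := geom_aux d (by omega) (j+1)
    have hlow : (d - 1) * ∑ i ∈ Finset.range (j+1), d ^ i
        ≤ ∑ i ∈ Finset.range (j+1), a i * d ^ i := by
      rw [Finset.mul_sum]
      exact Finset.sum_le_sum fun i hi => Nat.mul_le_mul_right _ (ha i (Finset.mem_range.mp hi))
    obtain ⟨t, ht1, ht2, ht3⟩ : ∃ t, t ≤ a (j+1) ∧ t * d ^ (j+1) ≤ n ∧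
        n - t * d ^ (j+1) ≤ ∑ i ∈ Finset.range (j+1), a i * d ^ i := by
      refine ⟨min (a (j+1)) (n / d ^ (j+1)), min_le_left _ _,
        le_trans (Nat.mul_le_mul_right _ (min_le_right _ _)) (Nat.div_mul_le_self n _), ?_⟩
      by_cases hcase : n / d ^ (j+1) ≤ a (j+1)
      · rw [min_eq_right hcase]
        have hmod := Nat.div_add_mod n (d ^ (j+1))
        have hlt : n % d ^ (j+1) < d ^ (j+1) := Nat.mod_lt _ hppos
        have hcm : n / d ^ (j+1) * d ^ (j+1) = d ^ (j+1) * (n / d ^ (j+1)) := Nat.mul_comm _ _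
        omega
      · rw [min_eq_left (by omega)]
        rw [Finset.sum_range_succ] at hn
        omega
    obtain ⟨c', hc'le, hc'z, hc'sum⟩ := ih a (fun i hi => ha i (by omega)) _ ht3
    refine ⟨fun i => if i = j+1 then t else c' i, ?_, ?_, ?_⟩
    · intro i
      show (if i = j+1 then t else c' i) ≤ a i
      by_cases h : i = j+1
      · rw [if_pos h, h]; exact ht1
      · rw [if_neg h]; exact hc'le i
    · intro i hi
      show (if i = j+1 then t else c' i) = 0
      rw [if_neg (by omega)]
      exact hc'z i (by omega)
    · rw [Finset.sum_range_succ]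
      have he : ∑ x ∈ Finset.range (j+1), (fun i => if i = j+1 then t else c' i) x * d ^ x
          = ∑ i ∈ Finset.range (j+1), c' i * d ^ i := by
        refine Finset.sum_congr rfl fun i hi => ?_
        have h : i ≠ j+1 := by have := Finset.mem_range.mp hi; omega
        show (if i = j+1 then t else c' i) * d ^ i = c' i * d ^ i
        rw [if_neg h]
      rw [he, hc'sum]
      show n - t * d ^ (j+1) + (if j+1 = j+1 then t else c' (j+1)) * d ^ (j+1) = n
      rw [if_pos rfl]
      omega

theorem stmt_6 (d : ℕ) (hd : 1 < d) (A : ℕ →₀ ℕ) (j : ℕ)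
    (hnorm : ∀ i < j, d - 1 ≤ A i ∧ A i ≤ 2 * (d - 1)) (hj : A j < d - 1) :
    (1 + ∑ i ∈ Finset.range (j + 1), A i * d ^ i) < d ^ (j + 1) ∧
    (∀ n < 1 + ∑ i ∈ Finset.range (j + 1), A i * d ^ i, n ∈ dspan d A) ∧
    (1 + ∑ i ∈ Finset.range (j + 1), A i * d ^ i) ∉ dspan d A := by
  have hgj := geom_aux d (by omega) j
  have hpj : (1:ℕ) ≤ d ^ j := Nat.one_le_pow _ _ (by omega)
  have part1 : (1 + ∑ i ∈ Finset.range (j + 1), A i * d ^ i) < d ^ (j + 1) := by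
    rw [Finset.sum_range_succ]
    have h1 : ∑ i ∈ Finset.range j, A i * d ^ i ≤ 2 * (d - 1) * ∑ i ∈ Finset.range j, d ^ i := by
      rw [Finset.mul_sum]
      exact Finset.sum_le_sum fun i hi =>
        Nat.mul_le_mul_right _ ((hnorm i (Finset.mem_range.mp hi)).2)
    have h1' : 2 * (d - 1) * ∑ i ∈ Finset.range j, d ^ i
        = 2 * ((d - 1) * ∑ i ∈ Finset.range j, d ^ i) := by ring
    have h2 : A j * d ^ j ≤ (d - 2) * d ^ j := Nat.mul_le_mul_right _ (by omega)
    have h3 : (d - 2) * d ^ j + 2 * d ^ j = d * d ^ j := by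
      rw [← Nat.add_mul]
      congr 1
      omega
    have h4 : d ^ (j+1) = d * d ^ j := by rw [pow_succ, mul_comm]
    omega
  refine ⟨part1, ?_, ?_⟩
  · intro n hn
    obtain ⟨c, hcle, hcz, hcsum⟩ :=
      rep d hd j A (fun i hi => (hnorm i hi).1) n (by omega)
    refine ⟨Finsupp.onFinset (Finset.range (j+1)) c
      (fun i hi => Finset.mem_range.mpr (by by_contra h; exact hi (hcz i (by omega)))), ?_, ?_⟩
    · intro i
      rw [Finsupp.onFinset_apply]
      exact hcle i
    · rw [Finsupp.sum_of_support_subset _ (Finsupp.support_onFinset_subset) _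
        (by intro i _; simp)]
      simp only [Finsupp.onFinset_apply]
      exact hcsum.symm
  · rintro ⟨c, hcle, hsum⟩
    rw [Finsupp.sum] at hsum
    by_cases hbig : ∃ i ∈ c.support, j + 1 ≤ i
    · obtain ⟨i, hi, hji⟩ := hbig
      have h1 : c i * d ^ i ≤ ∑ k ∈ c.support, c k * d ^ k :=
        Finset.single_le_sum (f := fun k => c k * d ^ k) (fun k _ => Nat.zero_le _) hi
      have h2 : d ^ (j+1) ≤ d ^ i := Nat.pow_le_pow_right (by omega) hji
      have h3 : c i ≠ 0 := Finsupp.mem_support_iff.mp hi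
      have h4 : d ^ i ≤ c i * d ^ i := Nat.le_mul_of_pos_left _ (by omega)
      omega
    · push_neg at hbig
      have hsub : ∑ k ∈ c.support, c k * d ^ k ≤ ∑ i ∈ Finset.range (j+1), A i * d ^ i := by
        calc ∑ k ∈ c.support, c k * d ^ k
            = ∑ k ∈ Finset.range (j+1), c k * d ^ k := by
              refine Finset.sum_subset (fun k hk => Finset.mem_range.mpr (hbig k hk)) ?_
              intro k _ hk
              have : c k = 0 := Finsupp.notMem_support_iff.mp hk
              simp [this]
          _ ≤ ∑ i ∈ Finset.range (j+1), A i * d ^ i :=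
              Finset.sum_le_sum fun i _ => Nat.mul_le_mul_right _ (hcle i)
      omega
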